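/- Diamond-norm-type bound from Choi state distance with dimension factor: for two channels Φ, Ψ from D(H_R) to D(H_S) with normalized Choi states ρ^Φ, ρ^Ψ, and for every density matrix σ on H_R, ‖Φ(σ) − Ψ(σ)‖₁ ≤ d_R · ‖ρ^Φ − ρ^Ψ‖₁, where d_R = dim H_R. -/

import Mathlib

open Matrix
open scoped Kronecker ComplexOrder

/-- Normalized Choi state of a linear map Φ on matrices:
ρ^Φ = (id_{R'} ⊗ Φ)(|ψ⟩⟨ψ|) with |ψ⟩ = d^{-1/2} Σ_i |ii⟩. -/
noncomputable def choiState {R S : Type*} [Fintype R] [DecidableEq R] [Fintype S]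
    (Φ : Matrix R R ℂ →ₗ[ℂ] Matrix S S ℂ) : Matrix (R × S) (R × S) ℂ :=
  Matrix.of fun p q =>
    ((Fintype.card R : ℂ))⁻¹ * Φ (Matrix.single p.1 q.1 1) p.2 q.2

/-- Trace norm of a Hermitian matrix: the sum of the absolute values of its
eigenvalues. -/
noncomputable def traceNormH {n : Type*} [Fintype n] [DecidableEq n]
    {M : Matrix n n ℂ} (hM : M.IsHermitian) : ℝ :=
  ∑ i, |hM.eigenvalues i|

section Aux

variable {m n : Type*} [Fintype m] [Fintype n] [DecidableEq m] [DecidableEq n]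

lemma ofReal_mul_re' (r : ℝ) (z : ℂ) : ((r : ℂ) * z).re = r * z.re := by
  rw [Complex.mul_re, Complex.ofReal_re, Complex.ofReal_im, zero_mul, sub_zero]

lemma kron_conjTranspose (A : Matrix m m ℂ) (B : Matrix n n ℂ) :
    (A ⊗ₖ B)ᴴ = Aᴴ ⊗ₖ Bᴴ := by
  ext ⟨i, s⟩ ⟨j, t⟩
  simp [conjTranspose_apply, kroneckerMap_apply]

lemma posSemidef_kron {A : Matrix m m ℂ} {B : Matrix n n ℂ}
    (hA : A.PosSemidef) (hB : B.PosSemidef) : (A ⊗ₖ B).PosSemidef := by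
  exact hA.kronecker hB

lemma conj_diag_psd (U : Matrix n n ℂ) (f : n → ℝ) (hf : ∀ i, 0 ≤ f i) :
    (U * diagonal (fun i => (f i : ℂ)) * star U).PosSemidef := by
  rw [star_eq_conjTranspose]
  exact (posSemidef_diagonal_iff.mpr fun i =>
    Complex.zero_le_real.mpr (hf i)).mul_mul_conjTranspose_same U

lemma one_add_conj {U : Matrix n n ℂ} (hU : U * star U = 1) (f : n → ℝ) :
    (1 : Matrix n n ℂ) + U * diagonal (fun i => (f i : ℂ)) * star U
      = U * diagonal (fun i => ((1 + f i : ℝ) : ℂ)) * star U := by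
  have h1 : (1 : Matrix n n ℂ) = U * diagonal (fun _ : n => (1:ℂ)) * star U := by
    rw [diagonal_one, mul_one, hU]
  rw [h1, ← add_mul, ← mul_add, diagonal_add]
  congr 2
  ext i
  push_cast
  simp

lemma one_sub_conj {U : Matrix n n ℂ} (hU : U * star U = 1) (f : n → ℝ) :
    (1 : Matrix n n ℂ) - U * diagonal (fun i => (f i : ℂ)) * star U
      = U * diagonal (fun i => ((1 - f i : ℝ) : ℂ)) * star U := by
  have h1 : (1 : Matrix n n ℂ) = U * diagonal (fun _ : n => (1:ℂ)) * star U := by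
    rw [diagonal_one, mul_one, hU]
  rw [h1, ← sub_mul, ← mul_sub, diagonal_sub]
  congr 2
  ext i
  push_cast
  simp

lemma trace_conj_conj {U : Matrix n n ℂ} (hU : star U * U = 1) (d e : n → ℂ) :
    ((U * diagonal d * star U) * (U * diagonal e * star U)).trace = ∑ i, d i * e i := by
  have h2 : ∀ X : Matrix n n ℂ, star U * (U * X) = X := fun X => by
    rw [← mul_assoc, hU, one_mul]
  have key : (U * diagonal d * star U) * (U * diagonal e * star U)
      = U * (diagonal d * (diagonal e * star U)) := by
    simp only [mul_assoc]
    rw [h2]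
  rw [key, trace_mul_comm]
  simp only [mul_assoc]
  rw [hU, mul_one, diagonal_mul_diagonal, trace_diagonal]

/-- trace equals the sum of eigenvalues. -/
lemma trace_eq_sum_eigenvalues {A : Matrix n n ℂ} (hA : A.IsHermitian) :
    A.trace = ∑ i, (hA.eigenvalues i : ℂ) := by
  conv_lhs => rw [hA.spectral_theorem, Unitary.conjStarAlgAut_apply]
  rw [trace_mul_comm, ← mul_assoc, Matrix.mem_unitaryGroup_iff'.mp (hA.eigenvectorUnitary).2,
    one_mul, trace_diagonal]
  simp [Function.comp]

/-- If σ is PSD with trace 1, then 1 - σ is PSD. -/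
lemma one_sub_psd {σ : Matrix n n ℂ} (hσ : σ.PosSemidef) (htr : σ.trace = 1) :
    ((1 : Matrix n n ℂ) - σ).PosSemidef := by
  have hH := hσ.1
  set U := (hH.eigenvectorUnitary : Matrix n n ℂ) with hUdef
  have hU : U * star U = 1 := Matrix.mem_unitaryGroup_iff.mp (hH.eigenvectorUnitary).2
  have hsum : ∑ i, hH.eigenvalues i = 1 := by
    have h1 := trace_eq_sum_eigenvalues hH
    rw [htr] at h1
    have h2 : ((∑ i, hH.eigenvalues i : ℝ) : ℂ) = ((1:ℝ):ℂ) := by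
      push_cast
      rw [← h1]
    exact_mod_cast h2
  have hle : ∀ i, hH.eigenvalues i ≤ 1 := by
    intro i
    rw [← hsum]
    exact Finset.single_le_sum (f := hH.eigenvalues)
      (fun j _ => hσ.eigenvalues_nonneg j) (Finset.mem_univ i)
  have hdecomp : (1 : Matrix n n ℂ) - σ
      = U * diagonal (fun i => ((1 - hH.eigenvalues i : ℝ) : ℂ)) * star U := by
    conv_lhs => rw [hH.spectral_theorem]
    rw [show diagonal (RCLike.ofReal ∘ hH.eigenvalues)
        = diagonal (fun i => ((hH.eigenvalues i : ℝ) : ℂ)) by rfl]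
    exact one_sub_conj hU _
  rw [hdecomp]
  exact conj_diag_psd U _ fun i => by linarith [hle i]

/-- core bound: re(tr(M B)) ≤ traceNormH M when 1 ± B are PSD. -/
lemma trace_mul_re_le {M B : Matrix n n ℂ} (hM : M.IsHermitian)
    (h1 : ((1 : Matrix n n ℂ) - B).PosSemidef) (h2 : ((1 : Matrix n n ℂ) + B).PosSemidef) :
    ((M * B).trace).re ≤ traceNormH hM := by
  set U := (hM.eigenvectorUnitary : Matrix n n ℂ) with hUdef
  have hU' : star U * U = 1 := Matrix.mem_unitaryGroup_iff'.mp (hM.eigenvectorUnitary).2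
  set C := star U * B * U with hCdef
  have htr : (M * B).trace = ∑ k, (hM.eigenvalues k : ℂ) * C k k := by
    conv_lhs => rw [hM.spectral_theorem, Unitary.conjStarAlgAut_apply]
    rw [trace_mul_comm]
    have e1 : B * (U * diagonal (RCLike.ofReal ∘ hM.eigenvalues) * star U)
        = B * U * diagonal (RCLike.ofReal ∘ hM.eigenvalues) * star U := by
      simp only [mul_assoc]
    rw [e1, trace_mul_comm, ← mul_assoc, ← mul_assoc]
    have e2 : star U * (B * U) = C := by rw [hCdef, mul_assoc]
    rw [mul_assoc (star U) B U, e2]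
    rw [Matrix.trace]
    congr 1
    ext k
    simp only [diag_apply, mul_apply, diagonal_apply, Function.comp_apply]
    rw [Finset.sum_eq_single k (by intro b _ hb; simp [hb]) (by simp)]
    simp [mul_comm]
  have hCkk : ∀ k, |(C k k).re| ≤ 1 := by
    intro k
    set v : n → ℂ := fun j => U j k with hv
    have hvC : C k k = star v ⬝ᵥ (B *ᵥ v) := by
      simp only [hCdef, mul_apply, dotProduct, mulVec, Pi.star_apply, hv, star_apply]
      calc ∑ x, (∑ i, star (U i k) * B i x) * U x k
          = ∑ x, ∑ i, star (U i k) * B i x * U x k := by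
            refine Finset.sum_congr rfl fun x _ => ?_
            rw [Finset.sum_mul]
        _ = ∑ i, ∑ x, star (U i k) * B i x * U x k := Finset.sum_comm
        _ = ∑ i, star (U i k) * ∑ x, B i x * U x k := by
            refine Finset.sum_congr rfl fun i _ => ?_
            rw [Finset.mul_sum]
            exact Finset.sum_congr rfl fun x _ => by ring
    have hvv : star v ⬝ᵥ v = 1 := by
      have h3 : (star U * U) k k = 1 := by rw [hU']; simp
      rw [← h3]
      simp only [mul_apply, dotProduct, star_apply, Pi.star_apply, hv]
    have hz1 := h1.dotProduct_mulVec_nonneg v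
    have hz2 := h2.dotProduct_mulVec_nonneg v
    rw [sub_mulVec, one_mulVec, dotProduct_sub, hvv, ← hvC] at hz1
    rw [add_mulVec, one_mulVec, dotProduct_add, hvv, ← hvC] at hz2
    rw [Complex.le_def] at hz1 hz2
    simp only [Complex.sub_re, Complex.one_re, Complex.zero_re, Complex.add_re] at hz1 hz2
    rw [abs_le]
    exact ⟨by linarith [hz2.1], by linarith [hz1.1]⟩
  rw [htr, Complex.re_sum]
  calc ∑ k, ((hM.eigenvalues k : ℂ) * C k k).re
      ≤ ∑ k, |hM.eigenvalues k| := by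
        refine Finset.sum_le_sum fun k _ => ?_
        rw [ofReal_mul_re']
        calc hM.eigenvalues k * (C k k).re ≤ |hM.eigenvalues k * (C k k).re| := le_abs_self _
          _ = |hM.eigenvalues k| * |(C k k).re| := abs_mul _ _
          _ ≤ |hM.eigenvalues k| * 1 := mul_le_mul_of_nonneg_left (hCkk k) (abs_nonneg _)
          _ = |hM.eigenvalues k| := mul_one _
    _ = traceNormH hM := rfl

end Aux

section Choi

variable {R S : Type*} [Fintype R] [DecidableEq R] [Fintype S] [DecidableEq S]

lemma choi_trace [Nonempty R] (Φ : Matrix R R ℂ →ₗ[ℂ] Matrix S S ℂ)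
    (σ : Matrix R R ℂ) (W : Matrix S S ℂ) :
    (Φ σ * W).trace = (Fintype.card R : ℂ) * ((choiState Φ) * (σᵀ ⊗ₖ W)).trace := by
  have hd : (Fintype.card R : ℂ) ≠ 0 := by
    simp [Fintype.card_ne_zero]
  have hσdec : Φ σ = ∑ i, ∑ j, σ i j • Φ (single i j 1) := by
    conv_lhs => rw [matrix_eq_sum_single σ]
    rw [map_sum]
    refine Finset.sum_congr rfl fun i _ => ?_
    rw [map_sum]
    refine Finset.sum_congr rfl fun j _ => ?_
    rw [show single i j (σ i j) = σ i j • single i j (1:ℂ) from by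
      rw [smul_single, smul_eq_mul, mul_one], _root_.map_smul]
  have lhs_eq : (Φ σ * W).trace
      = ∑ i, ∑ j, σ i j * (Φ (single i j 1) * W).trace := by
    rw [hσdec]
    simp [Finset.sum_mul, trace_sum, smul_mul_assoc, trace_smul, smul_eq_mul]
  have rhs_eq : ((choiState Φ) * (σᵀ ⊗ₖ W)).trace
      = (Fintype.card R : ℂ)⁻¹ * ∑ i, ∑ j, σ i j * (Φ (single i j 1) * W).trace := by
    rw [Matrix.trace]
    simp only [diag_apply, mul_apply, choiState, of_apply, kroneckerMap_apply,
      transpose_apply, Fintype.sum_prod_type]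
    rw [Finset.mul_sum]
    refine Finset.sum_congr rfl fun i _ => ?_
    rw [Finset.sum_comm, Finset.mul_sum]
    refine Finset.sum_congr rfl fun j _ => ?_
    rw [Matrix.trace, Finset.mul_sum, Finset.mul_sum]
    refine Finset.sum_congr rfl fun s _ => ?_
    simp only [diag_apply, mul_apply, Finset.mul_sum]
    refine Finset.sum_congr rfl fun t _ => ?_
    ring
  rw [lhs_eq, rhs_eq, ← mul_assoc, mul_inv_cancel₀ hd, one_mul]

end Choi

/-- diamond-norm-type bound from Choi state distance: for channels Φ, Ψ
(trace preserving, with positive semidefinite Choi states) and every density matrix σ,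
‖Φ(σ) − Ψ(σ)‖₁ ≤ d_R · ‖ρ^Φ − ρ^Ψ‖₁. -/
theorem trace_distance_bounded_by_choi_distance
    {R S : Type*} [Fintype R] [DecidableEq R] [Fintype S] [DecidableEq S]
    (Φ Ψ : Matrix R R ℂ →ₗ[ℂ] Matrix S S ℂ)
    (hΦCP : (choiState Φ).PosSemidef) (hΦTP : ∀ σ, (Φ σ).trace = σ.trace)
    (hΨCP : (choiState Ψ).PosSemidef) (hΨTP : ∀ σ, (Ψ σ).trace = σ.trace)
    (hC : (choiState Φ - choiState Ψ).IsHermitian)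
    (hout : ∀ σ : Matrix R R ℂ, σ.PosSemidef → (Φ σ - Ψ σ).IsHermitian) :
    ∀ (σ : Matrix R R ℂ) (hσ : σ.PosSemidef), σ.trace = 1 →
      traceNormH (hout σ hσ) ≤ (Fintype.card R : ℝ) * traceNormH hC := by
  intro σ hσ htr
  rcases isEmpty_or_nonempty R with hR | hR
  · exfalso
    rw [Matrix.trace] at htr
    simp at htr
  have hA := hout σ hσ
  set UA := (hA.eigenvectorUnitary : Matrix S S ℂ) with hUAdef
  have hUA : star UA * UA = 1 := Matrix.mem_unitaryGroup_iff'.mp (hA.eigenvectorUnitary).2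
  have hUA' : UA * star UA = 1 := Matrix.mem_unitaryGroup_iff.mp (hA.eigenvectorUnitary).2
  set g : S → ℝ := fun k => Real.sign (hA.eigenvalues k) with hgdef
  set W := UA * diagonal (fun k => (g k : ℂ)) * star UA with hWdef
  have hgabs : ∀ k, |g k| ≤ 1 := by
    intro k
    rcases lt_trichotomy (hA.eigenvalues k) 0 with h | h | h
    · rw [hgdef]; simp only [Real.sign_of_neg h]; norm_num
    · rw [hgdef]; simp [h, Real.sign_zero]
    · rw [hgdef]; simp only [Real.sign_of_pos h]; norm_num
  have hW1 : ((1 : Matrix S S ℂ) - W).PosSemidef := by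
    rw [hWdef, one_sub_conj hUA']
    exact conj_diag_psd UA _ fun k => by linarith [(abs_le.mp (hgabs k)).2]
  have hW2 : ((1 : Matrix S S ℂ) + W).PosSemidef := by
    rw [hWdef, one_add_conj hUA']
    exact conj_diag_psd UA _ fun k => by linarith [(abs_le.mp (hgabs k)).1]
  -- σᵀ facts
  have hσT : (σᵀ).PosSemidef := hσ.transpose
  have h1σT : ((1 : Matrix R R ℂ) - σᵀ).PosSemidef := by
    have h := (one_sub_psd hσ htr).transpose
    rwa [transpose_sub, transpose_one] at h
  -- 1 ± σᵀ ⊗ₖ W are PSD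
  have hB1 : ((1 : Matrix (R × S) (R × S) ℂ) - σᵀ ⊗ₖ W).PosSemidef := by
    have hdec : (1 : Matrix (R × S) (R × S) ℂ) - σᵀ ⊗ₖ W
        = ((1 : Matrix R R ℂ) - σᵀ) ⊗ₖ (1 : Matrix S S ℂ) + σᵀ ⊗ₖ ((1 : Matrix S S ℂ) - W) := by
      ext ⟨i, s⟩ ⟨j, t⟩
      simp only [Matrix.sub_apply, Matrix.add_apply, kroneckerMap_apply, one_apply, Prod.mk.injEq]
      by_cases hij : i = j <;> by_cases hst : s = t <;> simp [hij, hst] <;> ring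
    rw [hdec]
    exact (posSemidef_kron h1σT Matrix.PosSemidef.one).add (posSemidef_kron hσT hW1)
  have hB2 : ((1 : Matrix (R × S) (R × S) ℂ) + σᵀ ⊗ₖ W).PosSemidef := by
    have hdec : (1 : Matrix (R × S) (R × S) ℂ) + σᵀ ⊗ₖ W
        = ((1 : Matrix R R ℂ) - σᵀ) ⊗ₖ (1 : Matrix S S ℂ) + σᵀ ⊗ₖ ((1 : Matrix S S ℂ) + W) := by
      ext ⟨i, s⟩ ⟨j, t⟩
      simp only [Matrix.sub_apply, Matrix.add_apply, kroneckerMap_apply, one_apply, Prod.mk.injEq]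
      by_cases hij : i = j <;> by_cases hst : s = t <;> simp [hij, hst] <;> ring
    rw [hdec]
    exact (posSemidef_kron h1σT Matrix.PosSemidef.one).add (posSemidef_kron hσT hW2)
  -- trace(A * W) = traceNormH hA
  have htnA : ((Φ σ - Ψ σ) * W).trace = ((traceNormH (hout σ hσ) : ℝ) : ℂ) := by
    conv_lhs => rw [hA.spectral_theorem, Unitary.conjStarAlgAut_apply]
    rw [show diagonal (RCLike.ofReal ∘ hA.eigenvalues)
        = diagonal (fun k => ((hA.eigenvalues k : ℝ) : ℂ)) by rfl]
    rw [hWdef, trace_conj_conj hUA]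
    rw [traceNormH]
    push_cast
    refine Finset.sum_congr rfl fun k _ => ?_
    rw [← Complex.ofReal_mul]
    congr 1
    show hA.eigenvalues k * Real.sign (hA.eigenvalues k) = |hA.eigenvalues k|
    rcases lt_trichotomy (hA.eigenvalues k) 0 with h | h | h
    · rw [Real.sign_of_neg h, abs_of_neg h]; ring
    · simp [h]
    · rw [Real.sign_of_pos h, abs_of_pos h]; ring
  -- the Choi identity
  have key : ((Φ σ - Ψ σ) * W).trace
      = (Fintype.card R : ℂ) * (((choiState Φ - choiState Ψ)) * (σᵀ ⊗ₖ W)).trace := by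
    rw [sub_mul, trace_sub, choi_trace Φ σ W, choi_trace Ψ σ W, sub_mul, trace_sub]
    ring
  have hbound := trace_mul_re_le hC hB1 hB2
  have hfinal : traceNormH (hout σ hσ) = ((Φ σ - Ψ σ) * W).trace.re := by
    rw [htnA, Complex.ofReal_re]
  rw [hfinal, key]
  rw [show ((Fintype.card R : ℂ)) = (((Fintype.card R : ℝ)) : ℂ) by push_cast; rfl]
  rw [ofReal_mul_re']
  exact mul_le_mul_of_nonneg_left hbound (by positivity)
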